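/- Let p > 3 be prime and let E be the Montgomery curve By² = x(x² + Ax + 1) over F_p with A² ≠ 4 and B ≠ 0. For points P, Q, R on E, write ±P = (X^P : Z^P) for the image of P on the x-line P¹ (where (X : Y : Z) maps to (X : Z) if Z ≠ 0 and to (1 : 0) if Z = 0). Define B_XX = (X^P X^Q − Z^P Z^Q)², B_XZ = (X^P X^Q + Z^P Z^Q)(X^P Z^Q + Z^P X^Q) + 2A X^P Z^P X^Q Z^Q, and B_ZZ = (X^P Z^Q − Z^P X^Q)². Then ±R ∈ {±(P+Q), ±(P−Q)} if and only if B_ZZ (X^R)² − 2 B_XZ X^R Z^R + B_XX (Z^R)² = 0. -/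

import Mathlib

/-- The `x`-only quotient map `E → P¹` for a point on the Montgomery curve
`By² = x(x² + Ax + 1)` given via its scaled Weierstrass model
`v² = u³ + (A/B)u² + (1/B²)u` (so `x_Montgomery = B·u`): `(X : Y : Z) ↦ (X : Z)` if
`Z ≠ 0` and `(1 : 0)` otherwise, with canonical representatives. -/
def montXLine {F : Type*} [Field F] (B : F) {W : WeierstrassCurve.Affine F} :
    W.Point → F × F
  | .zero => (1, 0)
  | .some (x := x) _ _ => (B * x, 1)

namespace MontAux

open WeierstrassCurve.Affine WeierstrassCurve.Affine.Point

variable {F : Type*} [Field F]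

lemma montXLine_zero (B : F) {W : WeierstrassCurve.Affine F} :
    montXLine B (0 : W.Point) = (1, 0) := rfl

lemma montXLine_some (B : F) {W : WeierstrassCurve.Affine F} {x y : F}
    (h : W.Nonsingular x y) : montXLine B (Point.some _ _ h) = (B * x, 1) := rfl

lemma montXLine_neg (B : F) {W : WeierstrassCurve.Affine F} (T : W.Point) :
    montXLine B (-T) = montXLine B T := by
  rcases T with _ | h <;> rfl

lemma some_congr {W : WeierstrassCurve.Affine F} {x y y' : F}
    (h : W.Nonsingular x y) (h' : W.Nonsingular x y') (hy : y = y') :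
    Point.some _ _ h = Point.some _ _ h' := by subst hy; rfl

lemma cross_iff (B : F) {W : WeierstrassCurve.Affine F} (T R : W.Point)
    {XT ZT XR ZR : F} (hT : (XT, ZT) = montXLine B T) (hR : (XR, ZR) = montXLine B R) :
    montXLine B R = montXLine B T ↔ ZT * XR - XT * ZR = 0 := by
  rcases T with _ | @⟨xT, yT, hT'⟩ <;> rcases R with _ | @⟨xR, yR, hR'⟩ <;>
      simp only [montXLine, Prod.mk.injEq] at hT hR ⊢ <;>
    obtain ⟨rfl, rfl⟩ := hT <;> obtain ⟨rfl, rfl⟩ := hR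
  · norm_num
  · norm_num
  · norm_num
  · simp [sub_eq_zero]

end MontAux

set_option maxHeartbeats 1600000 in
open WeierstrassCurve.Affine WeierstrassCurve.Affine.Point MontAux in
/-- `±R ∈ {±(P+Q), ±(P−Q)}` iff
`B_ZZ (X^R)² − 2 B_XZ X^R Z^R + B_XX (Z^R)² = 0`. -/
theorem montgomery_check_correct {p : ℕ} [Fact p.Prime] (hp : 3 < p)
    (A B : ZMod p) (hA : A ^ 2 ≠ 4) (hB : B ≠ 0)
    (W : WeierstrassCurve.Affine (ZMod p))
    (hW : W = { a₁ := 0, a₂ := A / B, a₃ := 0, a₄ := 1 / B ^ 2, a₆ := 0 })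
    (P Q R : W.Point)
    (XP ZP XQ ZQ XR ZR BXX BXZ BZZ : ZMod p)
    (hP : (XP, ZP) = montXLine B P) (hQ : (XQ, ZQ) = montXLine B Q)
    (hR : (XR, ZR) = montXLine B R)
    (hBXX : BXX = (XP * XQ - ZP * ZQ) ^ 2)
    (hBXZ : BXZ = (XP * XQ + ZP * ZQ) * (XP * ZQ + ZP * XQ) + 2 * A * XP * ZP * XQ * ZQ)
    (hBZZ : BZZ = (XP * ZQ - ZP * XQ) ^ 2) :
    (montXLine B R = montXLine B (P + Q) ∨ montXLine B R = montXLine B (P - Q)) ↔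
      BZZ * XR ^ 2 - 2 * BXZ * XR * ZR + BXX * ZR ^ 2 = 0 := by
  have h2 : (2 : ZMod p) ≠ 0 := by
    have : ((2 : ℕ) : ZMod p) ≠ 0 := by
      rw [Ne, ZMod.natCast_eq_zero_iff]
      intro h; have := Nat.le_of_dvd (by norm_num) h; omega
    simpa using this
  have h4 : (4 : ZMod p) ≠ 0 := by
    have := mul_ne_zero h2 h2
    norm_num at this
    exact this
  have ha₁ : W.a₁ = 0 := by rw [hW]
  have ha₂ : W.a₂ = A / B := by rw [hW]
  have ha₃ : W.a₃ = 0 := by rw [hW]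
  have ha₄ : W.a₄ = 1 / B ^ 2 := by rw [hW]
  have ha₆ : W.a₆ = 0 := by rw [hW]
  have hnegy : ∀ x y : ZMod p, W.negY x y = -y := by
    intro x y
    rw [WeierstrassCurve.Affine.negY, ha₁, ha₃]; ring
  have hcurve : ∀ x y : ZMod p, W.Nonsingular x y →
      y ^ 2 = x ^ 3 + A / B * x ^ 2 + 1 / B ^ 2 * x := by
    intro x y h
    have := h.1
    rw [WeierstrassCurve.Affine.equation_iff, ha₁, ha₂, ha₃, ha₄, ha₆] at this
    linear_combination this
  have haddX : ∀ x x' L : ZMod p, W.addX x x' L = L ^ 2 - A / B - x - x' := by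
    intro x x' L
    rw [WeierstrassCurve.Affine.addX, ha₁, ha₂]; ring
  have hBv : B * B⁻¹ = 1 := mul_inv_cancel₀ hB
  have hc : 1 / B ^ 2 * B ^ 2 = 1 := div_mul_cancel₀ 1 (pow_ne_zero 2 hB)
  rw [sub_eq_add_neg]
  rcases P with _ | @⟨x₁, y₁, h₁⟩
  · -- P = 0
    rw [← Point.zero_def, zero_add, zero_add, montXLine_neg, or_self,
      cross_iff B Q R hQ hR]
    obtain ⟨rfl, rfl⟩ : XP = 1 ∧ ZP = 0 := by
      rw [← Point.zero_def, montXLine_zero] at hP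
      exact ⟨congrArg Prod.fst hP, congrArg Prod.snd hP⟩
    rw [show BZZ * XR ^ 2 - 2 * BXZ * XR * ZR + BXX * ZR ^ 2 = (ZQ * XR - XQ * ZR) ^ 2 by
      rw [hBXX, hBXZ, hBZZ]; ring]
    exact (sq_eq_zero_iff).symm
  rcases Q with _ | @⟨x₂, y₂, h₂⟩
  · -- Q = 0
    rw [← Point.zero_def, _root_.neg_zero, add_zero, or_self,
      cross_iff B (Point.some _ _ h₁) R hP hR]
    obtain ⟨rfl, rfl⟩ : XQ = 1 ∧ ZQ = 0 := by
      rw [← Point.zero_def, montXLine_zero] at hQ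
      exact ⟨congrArg Prod.fst hQ, congrArg Prod.snd hQ⟩
    rw [show BZZ * XR ^ 2 - 2 * BXZ * XR * ZR + BXX * ZR ^ 2 = (ZP * XR - XP * ZR) ^ 2 by
      rw [hBXX, hBXZ, hBZZ]; ring]
    exact (sq_eq_zero_iff).symm
  · -- P, Q both affine
    obtain ⟨rfl, rfl⟩ : XP = B * x₁ ∧ ZP = 1 := by
      rw [montXLine_some] at hP
      exact ⟨congrArg Prod.fst hP, congrArg Prod.snd hP⟩
    obtain ⟨rfl, rfl⟩ : XQ = B * x₂ ∧ ZQ = 1 := by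
      rw [montXLine_some] at hQ
      exact ⟨congrArg Prod.fst hQ, congrArg Prod.snd hQ⟩
    have e₁ := hcurve x₁ y₁ h₁
    have e₂ := hcurve x₂ y₂ h₂
    by_cases hx : x₁ = x₂
    · subst hx
      have hmain : (montXLine B R = (1, 0) ∨
          montXLine B R = montXLine B (Point.some _ _ h₁ + Point.some _ _ h₁)) ↔
          BZZ * XR ^ 2 - 2 * BXZ * XR * ZR + BXX * ZR ^ 2 = 0 := by
        by_cases hy0 : y₁ = W.negY x₁ y₁
        · rw [add_of_Y_eq rfl hy0, montXLine_zero, or_self]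
          have hy1 : y₁ = 0 := by
            have h' : 2 * y₁ = 0 := by rw [hnegy] at hy0; linear_combination hy0
            rcases mul_eq_zero.mp h' with h | h
            · exact absurd h h2
            · exact h
          have hE0 : x₁ ^ 3 + A / B * x₁ ^ 2 + 1 / B ^ 2 * x₁ = 0 := by
            rw [← e₁, hy1]; ring
          have hs3 : (B * x₁) ^ 3 + A * (B * x₁) ^ 2 + B * x₁ = 0 := by
            have h' : (B * x₁) ^ 3 + A * (B * x₁) ^ 2 + B * x₁ =
                B ^ 3 * (x₁ ^ 3 + A / B * x₁ ^ 2 + 1 / B ^ 2 * x₁) := by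
              linear_combination -A * x₁ ^ 2 * B ^ 2 * hBv - B * x₁ * hc
            rw [h', hE0, mul_zero]
          have hBXZ0 : BXZ = 0 := by rw [hBXZ]; linear_combination 2 * hs3
          have hBZZ0 : BZZ = 0 := by rw [hBZZ]; ring
          have hBXX0 : BXX ≠ 0 := by
            rw [hBXX]
            apply pow_ne_zero
            intro hcon
            rcases mul_eq_zero.mp
                (show (B * x₁ - 1) * (B * x₁ + 1) = 0 by linear_combination hcon) with h | h
            · apply hA
              have hs : B * x₁ = 1 := by linear_combination h
              rw [hs] at hs3
              have hA2 : A = -2 := by linear_combination hs3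
              rw [hA2]; norm_num
            · apply hA
              have hs : B * x₁ = -1 := by linear_combination h
              rw [hs] at hs3
              have hA2 : A = 2 := by linear_combination hs3
              rw [hA2]; norm_num
          rcases R with _ | @⟨xR, yR, hR'⟩
          · obtain ⟨rfl, rfl⟩ : XR = 1 ∧ ZR = 0 := by
              rw [← Point.zero_def, montXLine_zero] at hR
              exact ⟨congrArg Prod.fst hR, congrArg Prod.snd hR⟩
            exact iff_of_true rfl (by linear_combination hBZZ0)
          · obtain ⟨rfl, rfl⟩ : XR = B * xR ∧ ZR = 1 := by
              rw [montXLine_some] at hR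
              exact ⟨congrArg Prod.fst hR, congrArg Prod.snd hR⟩
            refine iff_of_false ?_ ?_
            · intro h
              exact one_ne_zero (congrArg Prod.snd h)
            · intro hcon
              apply hBXX0
              linear_combination hcon - (B * xR) ^ 2 * hBZZ0 + 2 * (B * xR) * hBXZ0
        · rw [add_self_of_Y_ne hy0, montXLine_some]
          have hy1 : y₁ ≠ 0 := fun h => hy0 (by rw [hnegy, h, _root_.neg_zero])
          have hE0 : x₁ ^ 3 + A / B * x₁ ^ 2 + 1 / B ^ 2 * x₁ ≠ 0 := by
            rw [← e₁]; exact pow_ne_zero 2 hy1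
          have hL' : W.slope x₁ x₁ y₁ y₁ * (2 * y₁) =
              3 * x₁ ^ 2 + 2 * (A / B) * x₁ + 1 / B ^ 2 := by
            rw [slope_of_Y_ne rfl hy0, ha₁, ha₂, ha₄, hnegy,
              show y₁ - -y₁ = 2 * y₁ from by ring,
              div_mul_cancel₀ _ (mul_ne_zero h2 hy1)]
            ring
          have hvw : B * (1 / B ^ 2) = B⁻¹ := by
            rw [one_div, sq, mul_inv, ← mul_assoc, mul_inv_cancel₀ hB, one_mul]
          have key2 : ∀ t : ZMod p, BZZ * t ^ 2 - 2 * BXZ * t * 1 + BXX * 1 ^ 2 =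
              (4 * B ^ 3 * (x₁ ^ 3 + A / B * x₁ ^ 2 + 1 / B ^ 2 * x₁)) *
                (B * W.addX x₁ x₁ (W.slope x₁ x₁ y₁ y₁) - t) := by
            intro t
            have hPd : (2 * y₁) ^ 2 * (B * W.addX x₁ x₁ (W.slope x₁ x₁ y₁ y₁) - t) =
                B * (3 * x₁ ^ 2 + 2 * (A / B) * x₁ + 1 / B ^ 2) ^ 2 - A * (2 * y₁) ^ 2 -
                  2 * B * x₁ * (2 * y₁) ^ 2 - (2 * y₁) ^ 2 * t := by
              rw [haddX]
              linear_combination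
                (B * (W.slope x₁ x₁ y₁ y₁ * (2 * y₁) +
                  (3 * x₁ ^ 2 + 2 * (A / B) * x₁ + 1 / B ^ 2))) * hL' +
                (-(2 * y₁) ^ 2 * A) * hBv
            have key2' : (2 * y₁) ^ 2 * (BZZ * t ^ 2 - 2 * BXZ * t * 1 + BXX * 1 ^ 2) =
                (4 * B ^ 3 * (x₁ ^ 3 + A / B * x₁ ^ 2 + 1 / B ^ 2 * x₁)) *
                  ((2 * y₁) ^ 2 * (B * W.addX x₁ x₁ (W.slope x₁ x₁ y₁ y₁) - t)) := by
              rw [hPd, hBXX, hBXZ, hBZZ]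
              linear_combination ((4 : ZMod p) +
      (-16 : ZMod p) * x₁ * B * t +
      (16 : ZMod p) * x₁ * B ^ 3 * t * (1 / B ^ 2) +
      (16 : ZMod p) * x₁ * A * B ^ 3 * (1 / B ^ 2) +
      (-8 : ZMod p) * x₁ ^ 2 * B ^ 2 +
      (32 : ZMod p) * x₁ ^ 2 * B ^ 4 * (1 / B ^ 2) +
      (-16 : ZMod p) * x₁ ^ 2 * A * B ^ 2 * t +
      (16 : ZMod p) * x₁ ^ 2 * A * B ^ 3 * t * B⁻¹ +
      (16 : ZMod p) * x₁ ^ 2 * A ^ 2 * B ^ 3 * B⁻¹ +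
      (16 : ZMod p) * x₁ ^ 3 * A * B ^ 3 +
      (32 : ZMod p) * x₁ ^ 3 * A * B ^ 4 * B⁻¹ +
      (36 : ZMod p) * x₁ ^ 4 * B ^ 4) * e₁ + ((-20 : ZMod p) * x₁ ^ 2 * A * B ^ 3 * (1 / B ^ 2) ^ 2 +
      (-16 : ZMod p) * x₁ ^ 3 * A * t +
      (32 : ZMod p) * x₁ ^ 3 * A * B ^ 2 * t * (1 / B ^ 2) +
      (-32 : ZMod p) * x₁ ^ 3 * A ^ 2 * B ^ 3 * B⁻¹ * (1 / B ^ 2) +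
      (-8 : ZMod p) * x₁ ^ 4 * A * B +
      (-24 : ZMod p) * x₁ ^ 4 * A * B ^ 3 * (1 / B ^ 2) +
      (16 : ZMod p) * x₁ ^ 4 * A ^ 2 * B ^ 2 * t * B⁻¹ +
      (-16 : ZMod p) * x₁ ^ 4 * A ^ 3 * B ^ 3 * B⁻¹ ^ 2 +
      (16 : ZMod p) * x₁ ^ 5 * A * B ^ 2 * t +
      (-32 : ZMod p) * x₁ ^ 5 * A ^ 2 * B ^ 3 * B⁻¹ +
      (-16 : ZMod p) * x₁ ^ 6 * A * B ^ 3) * hBv + ((-4 : ZMod p) * x₁ * (1 / B ^ 2) +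
      (-4 : ZMod p) * x₁ * B ^ 2 * (1 / B ^ 2) ^ 2 +
      (16 : ZMod p) * x₁ ^ 2 * B * t * (1 / B ^ 2) +
      (-4 : ZMod p) * x₁ ^ 2 * A * B * (1 / B ^ 2) +
      (-4 : ZMod p) * x₁ ^ 3 +
      (4 : ZMod p) * x₁ ^ 3 * B ^ 2 * (1 / B ^ 2) +
      (16 : ZMod p) * x₁ ^ 3 * A * t +
      (16 : ZMod p) * x₁ ^ 4 * B * t +
      (8 : ZMod p) * x₁ ^ 4 * A * B +
      (8 : ZMod p) * x₁ ^ 5 * B ^ 2) * hc +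
                (-(4 : ZMod p) * A * x₁ ^ 2) * hvw
            exact mul_left_cancel₀ (pow_ne_zero 2 (mul_ne_zero h2 hy1))
              (by linear_combination key2')
          have hfac : (4 * B ^ 3 * (x₁ ^ 3 + A / B * x₁ ^ 2 + 1 / B ^ 2 * x₁)) ≠ 0 :=
            mul_ne_zero (mul_ne_zero h4 (pow_ne_zero 3 hB)) hE0
          rcases R with _ | @⟨xR, yR, hR'⟩
          · obtain ⟨rfl, rfl⟩ : XR = 1 ∧ ZR = 0 := by
              rw [← Point.zero_def, montXLine_zero] at hR
              exact ⟨congrArg Prod.fst hR, congrArg Prod.snd hR⟩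
            exact iff_of_true (Or.inl rfl) (by linear_combination hBZZ)
          · obtain ⟨rfl, rfl⟩ : XR = B * xR ∧ ZR = 1 := by
              rw [montXLine_some] at hR
              exact ⟨congrArg Prod.fst hR, congrArg Prod.snd hR⟩
            rw [montXLine_some, key2 (B * xR)]
            constructor
            · rintro (h | h)
              · exact absurd (congrArg Prod.snd h) one_ne_zero
              · have h' : B * xR = B * W.addX x₁ x₁ (W.slope x₁ x₁ y₁ y₁) :=
                  congrArg Prod.fst h
                rw [h', sub_self, mul_zero]
            · intro h
              rcases mul_eq_zero.mp h with h' | h'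
              · exact absurd h' hfac
              · refine Or.inr ?_
                rw [Prod.mk.injEq]
                exact ⟨(sub_eq_zero.mp h').symm, rfl⟩
      rcases Y_eq_of_X_eq h₁.1 h₂.1 rfl with hy | hy
      · rw [some_congr h₂ h₁ hy.symm,
          show Point.some _ _ h₁ + -Point.some _ _ h₁ = 0 from by
            rw [neg_some]; exact add_of_Y_eq rfl (W.negY_negY x₁ y₁).symm,
          montXLine_zero, or_comm]
        exact hmain
      · rw [add_of_Y_eq rfl hy, montXLine_zero, neg_some,
          some_congr ((nonsingular_neg ..).mpr h₂) h₁ hy.symm]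
        exact hmain
    · -- x₁ ≠ x₂
      have hd : x₁ - x₂ ≠ 0 := sub_ne_zero.mpr hx
      have hBZZ0 : BZZ ≠ 0 := by
        rw [hBZZ]
        apply pow_ne_zero
        intro hcon
        apply hd
        rcases mul_eq_zero.mp (show B * (x₁ - x₂) = 0 by linear_combination hcon) with h | h
        · exact absurd h hB
        · exact h
      rw [add_of_X_ne hx, neg_some, add_of_X_ne hx, montXLine_some, montXLine_some]
      have hsqp : ((y₁ - y₂) / (x₁ - x₂)) ^ 2 * (x₁ - x₂) ^ 2 = (y₁ - y₂) ^ 2 := by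
        rw [div_pow, div_mul_cancel₀ _ (pow_ne_zero 2 hd)]
      have hsqm : ((y₁ - -y₂) / (x₁ - x₂)) ^ 2 * (x₁ - x₂) ^ 2 = (y₁ + y₂) ^ 2 := by
        rw [div_pow, div_mul_cancel₀ _ (pow_ne_zero 2 hd)]; ring
      have key : ∀ t : ZMod p, BZZ * t ^ 2 - 2 * BXZ * t * 1 + BXX * 1 ^ 2 =
          BZZ * ((t - B * W.addX x₁ x₂ (W.slope x₁ x₂ y₁ y₂)) *
            (t - B * W.addX x₁ x₂ (W.slope x₁ x₂ y₁ (W.negY x₂ y₂)))) := by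
        intro t
        have hGp : (x₁ - x₂) ^ 2 * (t - B * W.addX x₁ x₂ (W.slope x₁ x₂ y₁ y₂)) =
            (x₁ - x₂) ^ 2 * t - B * (y₁ - y₂) ^ 2 + A * (x₁ - x₂) ^ 2 +
              B * (x₁ + x₂) * (x₁ - x₂) ^ 2 := by
          rw [haddX, slope_of_X_ne hx]
          linear_combination (-B) * hsqp + A * (x₁ - x₂) ^ 2 * hBv
        have hGm : (x₁ - x₂) ^ 2 * (t - B * W.addX x₁ x₂ (W.slope x₁ x₂ y₁ (W.negY x₂ y₂))) =
            (x₁ - x₂) ^ 2 * t - B * (y₁ + y₂) ^ 2 + A * (x₁ - x₂) ^ 2 +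
              B * (x₁ + x₂) * (x₁ - x₂) ^ 2 := by
          rw [haddX, slope_of_X_ne hx, hnegy]
          linear_combination (-B) * hsqm + A * (x₁ - x₂) ^ 2 * hBv
        have key' : (x₁ - x₂) ^ 2 * (x₁ - x₂) ^ 2 *
              (BZZ * t ^ 2 - 2 * BXZ * t * 1 + BXX * 1 ^ 2) =
            BZZ * (((x₁ - x₂) ^ 2 * (t - B * W.addX x₁ x₂ (W.slope x₁ x₂ y₁ y₂))) *
              ((x₁ - x₂) ^ 2 * (t - B * W.addX x₁ x₂ (W.slope x₁ x₂ y₁ (W.negY x₂ y₂))))) := by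
          rw [hGp, hGm, hBXX, hBXZ, hBZZ]
          linear_combination ((2 : ZMod p) * x₂ ^ 2 * y₂ ^ 2 * B ^ 4 +
      (-1 : ZMod p) * x₂ ^ 2 * y₁ ^ 2 * B ^ 4 +
      (2 : ZMod p) * x₂ ^ 4 * B ^ 3 * t +
      (2 : ZMod p) * x₂ ^ 4 * A * B ^ 3 +
      (2 : ZMod p) * x₂ ^ 5 * B ^ 4 +
      (-4 : ZMod p) * x₁ * x₂ * y₂ ^ 2 * B ^ 4 +
      (2 : ZMod p) * x₁ * x₂ * y₁ ^ 2 * B ^ 4 +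
      (-1 : ZMod p) * x₁ * x₂ ^ 2 * B ^ 4 * (1 / B ^ 2) +
      (-8 : ZMod p) * x₁ * x₂ ^ 3 * B ^ 3 * t +
      (-8 : ZMod p) * x₁ * x₂ ^ 3 * A * B ^ 3 +
      (-6 : ZMod p) * x₁ * x₂ ^ 4 * B ^ 4 +
      (2 : ZMod p) * x₁ ^ 2 * y₂ ^ 2 * B ^ 4 +
      (-1 : ZMod p) * x₁ ^ 2 * y₁ ^ 2 * B ^ 4 +
      (2 : ZMod p) * x₁ ^ 2 * x₂ * B ^ 4 * (1 / B ^ 2) +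
      (12 : ZMod p) * x₁ ^ 2 * x₂ ^ 2 * B ^ 3 * t +
      (12 : ZMod p) * x₁ ^ 2 * x₂ ^ 2 * A * B ^ 3 +
      (-1 : ZMod p) * x₁ ^ 2 * x₂ ^ 2 * A * B ^ 4 * B⁻¹ +
      (4 : ZMod p) * x₁ ^ 2 * x₂ ^ 3 * B ^ 4 +
      (-1 : ZMod p) * x₁ ^ 3 * B ^ 4 * (1 / B ^ 2) +
      (-8 : ZMod p) * x₁ ^ 3 * x₂ * B ^ 3 * t +
      (-8 : ZMod p) * x₁ ^ 3 * x₂ * A * B ^ 3 +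
      (2 : ZMod p) * x₁ ^ 3 * x₂ * A * B ^ 4 * B⁻¹ +
      (3 : ZMod p) * x₁ ^ 3 * x₂ ^ 2 * B ^ 4 +
      (2 : ZMod p) * x₁ ^ 4 * B ^ 3 * t +
      (2 : ZMod p) * x₁ ^ 4 * A * B ^ 3 +
      (-1 : ZMod p) * x₁ ^ 4 * A * B ^ 4 * B⁻¹ +
      (-4 : ZMod p) * x₁ ^ 4 * x₂ * B ^ 4 +
      (1 : ZMod p) * x₁ ^ 5 * B ^ 4) * e₁ + ((-1 : ZMod p) * x₂ ^ 2 * y₂ ^ 2 * B ^ 4 +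
      (-1 : ZMod p) * x₂ ^ 3 * B ^ 4 * (1 / B ^ 2) +
      (2 : ZMod p) * x₂ ^ 4 * B ^ 3 * t +
      (2 : ZMod p) * x₂ ^ 4 * A * B ^ 3 +
      (-1 : ZMod p) * x₂ ^ 4 * A * B ^ 4 * B⁻¹ +
      (1 : ZMod p) * x₂ ^ 5 * B ^ 4 +
      (2 : ZMod p) * x₁ * x₂ * y₂ ^ 2 * B ^ 4 +
      (4 : ZMod p) * x₁ * x₂ ^ 2 * B ^ 4 * (1 / B ^ 2) +
      (-8 : ZMod p) * x₁ * x₂ ^ 3 * B ^ 3 * t +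
      (-8 : ZMod p) * x₁ * x₂ ^ 3 * A * B ^ 3 +
      (2 : ZMod p) * x₁ * x₂ ^ 3 * A * B ^ 4 * B⁻¹ +
      (-4 : ZMod p) * x₁ * x₂ ^ 4 * B ^ 4 +
      (-1 : ZMod p) * x₁ ^ 2 * y₂ ^ 2 * B ^ 4 +
      (-5 : ZMod p) * x₁ ^ 2 * x₂ * B ^ 4 * (1 / B ^ 2) +
      (12 : ZMod p) * x₁ ^ 2 * x₂ ^ 2 * B ^ 3 * t +
      (12 : ZMod p) * x₁ ^ 2 * x₂ ^ 2 * A * B ^ 3 +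
      (1 : ZMod p) * x₁ ^ 2 * x₂ ^ 2 * A * B ^ 4 * B⁻¹ +
      (3 : ZMod p) * x₁ ^ 2 * x₂ ^ 3 * B ^ 4 +
      (2 : ZMod p) * x₁ ^ 3 * B ^ 4 * (1 / B ^ 2) +
      (-8 : ZMod p) * x₁ ^ 3 * x₂ * B ^ 3 * t +
      (-8 : ZMod p) * x₁ ^ 3 * x₂ * A * B ^ 3 +
      (-4 : ZMod p) * x₁ ^ 3 * x₂ * A * B ^ 4 * B⁻¹ +
      (6 : ZMod p) * x₁ ^ 3 * x₂ ^ 2 * B ^ 4 +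
      (2 : ZMod p) * x₁ ^ 4 * B ^ 3 * t +
      (2 : ZMod p) * x₁ ^ 4 * A * B ^ 3 +
      (2 : ZMod p) * x₁ ^ 4 * A * B ^ 4 * B⁻¹ +
      (-10 : ZMod p) * x₁ ^ 4 * x₂ * B ^ 4 +
      (4 : ZMod p) * x₁ ^ 5 * B ^ 4) * e₂ + ((-2 : ZMod p) * x₂ ^ 5 * A * B ^ 3 * (1 / B ^ 2) +
      (2 : ZMod p) * x₂ ^ 6 * A * B ^ 2 * t +
      (1 : ZMod p) * x₂ ^ 6 * A ^ 2 * B ^ 2 +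
      (-1 : ZMod p) * x₂ ^ 6 * A ^ 2 * B ^ 3 * B⁻¹ +
      (6 : ZMod p) * x₁ * x₂ ^ 4 * A * B ^ 3 * (1 / B ^ 2) +
      (-8 : ZMod p) * x₁ * x₂ ^ 5 * A * B ^ 2 * t +
      (-6 : ZMod p) * x₁ * x₂ ^ 5 * A ^ 2 * B ^ 2 +
      (2 : ZMod p) * x₁ * x₂ ^ 5 * A ^ 2 * B ^ 3 * B⁻¹ +
      (-2 : ZMod p) * x₁ * x₂ ^ 6 * A * B ^ 3 +
      (-4 : ZMod p) * x₁ ^ 2 * x₂ ^ 3 * A * B ^ 3 * (1 / B ^ 2) +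
      (14 : ZMod p) * x₁ ^ 2 * x₂ ^ 4 * A * B ^ 2 * t +
      (15 : ZMod p) * x₁ ^ 2 * x₂ ^ 4 * A ^ 2 * B ^ 2 +
      (1 : ZMod p) * x₁ ^ 2 * x₂ ^ 4 * A ^ 2 * B ^ 3 * B⁻¹ +
      (6 : ZMod p) * x₁ ^ 2 * x₂ ^ 5 * A * B ^ 3 +
      (-4 : ZMod p) * x₁ ^ 3 * x₂ ^ 2 * A * B ^ 3 * (1 / B ^ 2) +
      (-16 : ZMod p) * x₁ ^ 3 * x₂ ^ 3 * A * B ^ 2 * t +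
      (-20 : ZMod p) * x₁ ^ 3 * x₂ ^ 3 * A ^ 2 * B ^ 2 +
      (-4 : ZMod p) * x₁ ^ 3 * x₂ ^ 3 * A ^ 2 * B ^ 3 * B⁻¹ +
      (-4 : ZMod p) * x₁ ^ 3 * x₂ ^ 4 * A * B ^ 3 +
      (6 : ZMod p) * x₁ ^ 4 * x₂ * A * B ^ 3 * (1 / B ^ 2) +
      (14 : ZMod p) * x₁ ^ 4 * x₂ ^ 2 * A * B ^ 2 * t +
      (15 : ZMod p) * x₁ ^ 4 * x₂ ^ 2 * A ^ 2 * B ^ 2 +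
      (1 : ZMod p) * x₁ ^ 4 * x₂ ^ 2 * A ^ 2 * B ^ 3 * B⁻¹ +
      (-4 : ZMod p) * x₁ ^ 4 * x₂ ^ 3 * A * B ^ 3 +
      (-2 : ZMod p) * x₁ ^ 5 * A * B ^ 3 * (1 / B ^ 2) +
      (-8 : ZMod p) * x₁ ^ 5 * x₂ * A * B ^ 2 * t +
      (-6 : ZMod p) * x₁ ^ 5 * x₂ * A ^ 2 * B ^ 2 +
      (2 : ZMod p) * x₁ ^ 5 * x₂ * A ^ 2 * B ^ 3 * B⁻¹ +
      (6 : ZMod p) * x₁ ^ 5 * x₂ ^ 2 * A * B ^ 3 +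
      (2 : ZMod p) * x₁ ^ 6 * A * B ^ 2 * t +
      (1 : ZMod p) * x₁ ^ 6 * A ^ 2 * B ^ 2 +
      (-1 : ZMod p) * x₁ ^ 6 * A ^ 2 * B ^ 3 * B⁻¹ +
      (-2 : ZMod p) * x₁ ^ 6 * x₂ * A * B ^ 3) * hBv + ((-1 : ZMod p) * x₂ ^ 4 +
      (-1 : ZMod p) * x₂ ^ 4 * B ^ 2 * (1 / B ^ 2) +
      (2 : ZMod p) * x₂ ^ 5 * B * t +
      (4 : ZMod p) * x₁ * x₂ ^ 3 +
      (4 : ZMod p) * x₁ * x₂ ^ 3 * B ^ 2 * (1 / B ^ 2) +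
      (-6 : ZMod p) * x₁ * x₂ ^ 4 * B * t +
      (2 : ZMod p) * x₁ * x₂ ^ 5 * B ^ 2 +
      (-6 : ZMod p) * x₁ ^ 2 * x₂ ^ 2 +
      (-6 : ZMod p) * x₁ ^ 2 * x₂ ^ 2 * B ^ 2 * (1 / B ^ 2) +
      (4 : ZMod p) * x₁ ^ 2 * x₂ ^ 3 * B * t +
      (-8 : ZMod p) * x₁ ^ 2 * x₂ ^ 4 * B ^ 2 +
      (4 : ZMod p) * x₁ ^ 3 * x₂ +
      (4 : ZMod p) * x₁ ^ 3 * x₂ * B ^ 2 * (1 / B ^ 2) +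
      (4 : ZMod p) * x₁ ^ 3 * x₂ ^ 2 * B * t +
      (12 : ZMod p) * x₁ ^ 3 * x₂ ^ 3 * B ^ 2 +
      (-1 : ZMod p) * x₁ ^ 4 +
      (-1 : ZMod p) * x₁ ^ 4 * B ^ 2 * (1 / B ^ 2) +
      (-6 : ZMod p) * x₁ ^ 4 * x₂ * B * t +
      (-8 : ZMod p) * x₁ ^ 4 * x₂ ^ 2 * B ^ 2 +
      (2 : ZMod p) * x₁ ^ 5 * B * t +
      (2 : ZMod p) * x₁ ^ 5 * x₂ * B ^ 2) * hc
        exact mul_left_cancel₀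
          (mul_ne_zero (pow_ne_zero 2 hd) (pow_ne_zero 2 hd)) (by linear_combination key')
      rcases R with _ | @⟨xR, yR, hR'⟩
      · obtain ⟨rfl, rfl⟩ : XR = 1 ∧ ZR = 0 := by
          rw [← Point.zero_def, montXLine_zero] at hR
          exact ⟨congrArg Prod.fst hR, congrArg Prod.snd hR⟩
        refine iff_of_false ?_ ?_
        · rintro (h | h) <;> exact one_ne_zero (congrArg Prod.snd h).symm
        · intro hcon
          exact hBZZ0 (by linear_combination hcon)
      · obtain ⟨rfl, rfl⟩ : XR = B * xR ∧ ZR = 1 := by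
          rw [montXLine_some] at hR
          exact ⟨congrArg Prod.fst hR, congrArg Prod.snd hR⟩
        rw [montXLine_some, key (B * xR), mul_eq_zero, mul_eq_zero]
        constructor
        · rintro (h | h)
          · exact Or.inr (Or.inl (sub_eq_zero.mpr (congrArg Prod.fst h)))
          · exact Or.inr (Or.inr (sub_eq_zero.mpr (congrArg Prod.fst h)))
        · rintro (h | h | h)
          · exact absurd h hBZZ0
          · exact Or.inl (by rw [Prod.mk.injEq]; exact ⟨sub_eq_zero.mp h, rfl⟩)
          · exact Or.inr (by rw [Prod.mk.injEq]; exact ⟨sub_eq_zero.mp h, rfl⟩)
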